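/- Let k ≥ 1 and m ≥ 2k be integers, and let φ^μ be an irreducible unitary matrix representation of S(m) with m_μ ≠ 0 on (ℂ^d)^{⊗m}, in PRIR form relative to the chain S(m) ⊃ S(m−1) ⊃ ⋯ ⊃ S(m−k), with basis indices written i_μ = (r_{μ/β}, i_β). Then the partial trace over the last k tensor factors satisfies tr_{m−k+1,…,m} E^μ_{(r_{μ/β},i_β),(r̃_{μ/β'},j_{β'})} = δ^{r_{μ/β}, r̃_{μ/β'}}·(m_μ/m_β)·E^β_{i_β j_β}, an operator acting on (ℂ^d)^{⊗(m−k)} built from the fixed matrix irrep φ^β of S(m−k). -/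

import Mathlib

open scoped BigOperators
open scoped Classical
open scoped ComplexOrder
open Matrix

noncomputable section

/-- Square matrices on the computational basis of `(ℂ^d)^{⊗ n}`. -/
abbrev Mat (d n : ℕ) := Matrix (Fin n → Fin d) (Fin n → Fin d) ℂ

/-- The unitary permuting the tensor factors according to `σ`. -/
def Vperm (d n : ℕ) (σ : Equiv.Perm (Fin n)) : Mat d n :=
  Matrix.of fun f g => if f ∘ σ = g then (1 : ℂ) else 0

/-- Orthogonal projector onto the maximally entangled state of factors `r` and `s`,
tensored with the identity on the remaining factors. -/
def Pplus (d n : ℕ) (r s : Fin n) : Mat d n :=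
  Matrix.of fun f g =>
    if f r = f s ∧ g r = g s ∧ ∀ t : Fin n, t ≠ r → t ≠ s → f t = g t
    then (1 : ℂ) / d else 0

/-- `V^{(k)} = d^k · P⁺_{n-2k+1,n} ⋯ P⁺_{n-k,n-k+1}` on `n = a + 2k` factors
(`a = n - 2k`), tensored with the identity on the remaining factors. -/
def Vk (d a k : ℕ) : Mat d (a + k + k) :=
  ((d : ℂ) ^ k) •
    ((List.finRange k).map fun j : Fin k =>
      Pplus d (a + k + k) ⟨a + (j : ℕ), by have := j.isLt; omega⟩
        ⟨a + k + k - 1 - (j : ℕ), by have := j.isLt; omega⟩).prod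

/-- Extension of an operator on the first `m` factors by the identity on the rest. -/
def extOp {d m n : ℕ} (h : m ≤ n) (X : Mat d m) : Mat d n :=
  Matrix.of fun f g =>
    if ∀ i : Fin n, m ≤ (i : ℕ) → f i = g i
    then X (fun i => f (Fin.castLE h i)) (fun i => g (Fin.castLE h i)) else 0

def splice {d a b : ℕ} (f : Fin a → Fin d) (t : Fin b → Fin d) : Fin (a + b) → Fin d :=
  fun i => if h : (i : ℕ) < a then f ⟨i, h⟩ else t ⟨(i : ℕ) - a, by have := i.isLt; omega⟩

/-- Partial trace over the last `b` tensor factors. -/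
def ptraceLast {d : ℕ} (a b : ℕ) (X : Mat d (a + b)) : Mat d a :=
  Matrix.of fun f g => ∑ t : Fin b → Fin d, X (splice f t) (splice g t)

def finLtEquiv {m n : ℕ} (h : m ≤ n) : Fin m ≃ {i : Fin n // (i : ℕ) < m} where
  toFun i := ⟨⟨(i : ℕ), lt_of_lt_of_le i.isLt h⟩, i.isLt⟩
  invFun j := ⟨(j.1 : ℕ), j.2⟩
  left_inv i := rfl
  right_inv j := rfl

/-- The embedding of `S(m)` into `S(n)`, acting on the first `m` letters. -/
def permExt {m n : ℕ} (h : m ≤ n) (σ : Equiv.Perm (Fin m)) : Equiv.Perm (Fin n) :=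
  σ.extendDomain (finLtEquiv h)

/-- A unitary irreducible matrix representation (Schur's criterion). -/
def IsUnitaryIrrep {G : Type*} [Group G] {e : ℕ}
    (φ : G →* Matrix (Fin e) (Fin e) ℂ) : Prop :=
  (∀ g, (φ g)ᴴ * φ g = 1) ∧
  ∀ X : Matrix (Fin e) (Fin e) ℂ, (∀ g, X * φ g = φ g * X) →
    ∃ c : ℂ, X = c • (1 : Matrix (Fin e) (Fin e) ℂ)

/-- Operator basis `E^μ_{ij} = (d_μ/m!) Σ_τ φ^μ_{ji}(τ⁻¹) V_τ` on the first `m` factors. -/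
def Eop (d m : ℕ) {e : ℕ} (φ : Equiv.Perm (Fin m) →* Matrix (Fin e) (Fin e) ℂ)
    (i j : Fin e) : Mat d m :=
  ((e : ℂ) / (Nat.factorial m : ℂ)) •
    ∑ τ : Equiv.Perm (Fin m), φ τ⁻¹ j i • Vperm d m τ

/-- Young projector `P_μ = Σ_i E^μ_{ii}`. -/
def Pop (d m : ℕ) {e : ℕ} (φ : Equiv.Perm (Fin m) →* Matrix (Fin e) (Fin e) ℂ) : Mat d m :=
  ∑ i : Fin e, Eop d m φ i i

/-- Schur–Weyl multiplicity `m_μ = tr(P_μ)/d_μ` (a real number). -/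
def multSW (d m : ℕ) {e : ℕ} (φ : Equiv.Perm (Fin m) →* Matrix (Fin e) (Fin e) ℂ) : ℝ :=
  (Matrix.trace (Pop d m φ)).re / (e : ℝ)

/-- A family of concrete unitary irreducible matrix representations of `S(a)`. -/
structure IrrepFamily (a : ℕ) where
  Label : Type
  [instFintype : Fintype Label]
  [instDecEq : DecidableEq Label]
  dim : Label → ℕ
  dim_pos : ∀ ℓ, 0 < dim ℓ
  rep : ∀ ℓ, Equiv.Perm (Fin a) →* Matrix (Fin (dim ℓ)) (Fin (dim ℓ)) ℂ
  irrep : ∀ ℓ, IsUnitaryIrrep (rep ℓ)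

attribute [instance] IrrepFamily.instFintype IrrepFamily.instDecEq

/-- An irreducible unitary representation of `S(a+k)` in PRIR form relative to the chain
`S(a+k) ⊃ ⋯ ⊃ S(a)`: the restriction to `S(a)` is block diagonal, the blocks being
indexed by branching paths, the block of every path ending at the irrep `α` of `S(a)`
being one and the same fixed matrix irrep `Φ.rep α`. -/
structure PRIRData (a k : ℕ) (Φ : IrrepFamily a) (e : ℕ) where
  rep : Equiv.Perm (Fin (a + k)) →* Matrix (Fin e) (Fin e) ℂ
  irrep : IsUnitaryIrrep rep
  Path : Type
  [instFintypePath : Fintype Path]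
  [instDecEqPath : DecidableEq Path]
  endOf : Path → Φ.Label
  basis : ((r : Path) × Fin (Φ.dim (endOf r))) ≃ Fin e
  block_diag : ∀ (h : Equiv.Perm (Fin a)) (r : Path) (l l' : Fin (Φ.dim (endOf r))),
      rep (permExt (Nat.le_add_right a k) h) (basis ⟨r, l⟩) (basis ⟨r, l'⟩)
        = Φ.rep (endOf r) h l l'
  block_off : ∀ (h : Equiv.Perm (Fin a)) (r r' : Path), r ≠ r' →
      ∀ (l : Fin (Φ.dim (endOf r))) (l' : Fin (Φ.dim (endOf r'))),
      rep (permExt (Nat.le_add_right a k) h) (basis ⟨r, l⟩) (basis ⟨r', l'⟩) = 0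

attribute [instance] PRIRData.instFintypePath PRIRData.instDecEqPath

/-- The number of paths `m_{μ/α}`, i.e. the multiplicity of `α` in the restriction. -/
def PRIRData.pathMult {a k : ℕ} {Φ : IrrepFamily a} {e : ℕ}
    (P : PRIRData a k Φ e) (α : Φ.Label) : ℕ :=
  Fintype.card {r : P.Path // P.endOf r = α}

/-- The basis operators
`F^{r_{μ/α} r_{ν/α}}_{i_μ j_ν} = (m_α/√(m_μ m_ν)) E^μ_{i_μ,(r,1_α)} V^{(k)} E^ν_{(s,1_α),j_ν}`. -/
def Fop (d a k : ℕ) (Φ : IrrepFamily a) {e e' : ℕ}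
    (P : PRIRData a k Φ e) (Q : PRIRData a k Φ e')
    (r : P.Path) (s : Q.Path) (i : Fin e) (j : Fin e') : Mat d (a + k + k) :=
  ((multSW d a (Φ.rep (P.endOf r)) /
      Real.sqrt (multSW d (a + k) P.rep * multSW d (a + k) Q.rep) : ℝ) : ℂ) •
    (extOp (Nat.le_add_right (a + k) k)
        (Eop d (a + k) P.rep i (P.basis ⟨r, ⟨0, Φ.dim_pos _⟩⟩)) *
      Vk d a k *
      extOp (Nat.le_add_right (a + k) k)
        (Eop d (a + k) Q.rep (Q.basis ⟨s, ⟨0, Φ.dim_pos _⟩⟩) j))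

/-- The projectors `F_μ(α) = Σ_{r_{μ/α}} Σ_{k_μ} F^{r r}_{k k}`. -/
def Fproj (d a k : ℕ) (Φ : IrrepFamily a) {e : ℕ}
    (P : PRIRData a k Φ e) (α : Φ.Label) : Mat d (a + k + k) :=
  ∑ r : {r : P.Path // P.endOf r = α}, ∑ i : Fin e, Fop d a k Φ P P r.1 r.1 i i

/-- Eigenvalues `λ_μ(α) = (k!·C(N,k)/d^N)·(m_μ d_α)/(m_α d_μ)` of the MPBT operator. -/
def lambdaEig (d a k : ℕ) (Φ : IrrepFamily a) {e : ℕ}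
    (P : PRIRData a k Φ e) (α : Φ.Label) : ℝ :=
  ((Nat.factorial k * Nat.choose (a + k) k : ℝ) / (d : ℝ) ^ (a + k)) *
    (multSW d (a + k) P.rep * (Φ.dim α : ℝ)) / (multSW d a (Φ.rep α) * (e : ℝ))

/-- A family of irreps of `S(a+k)` in PRIR form relative to `Φ`, one chosen
representative for each isomorphism class (pairwise non-isomorphic and complete). -/
structure PRIRFamily (a k : ℕ) (Φ : IrrepFamily a) where
  Label : Type
  [instFintype : Fintype Label]
  [instDecEq : DecidableEq Label]
  dim : Label → ℕ
  prir : ∀ ℓ, PRIRData a k Φ (dim ℓ)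
  noniso : ∀ ℓ ℓ', ℓ ≠ ℓ' → ∀ T : Matrix (Fin (dim ℓ)) (Fin (dim ℓ')) ℂ,
      (∀ σ, (prir ℓ).rep σ * T = T * (prir ℓ').rep σ) → T = 0
  complete : ∀ (e : ℕ) (ψ : Equiv.Perm (Fin (a + k)) →* Matrix (Fin e) (Fin e) ℂ),
      IsUnitaryIrrep ψ → ∃ ℓ, ∃ T : Matrix (Fin (dim ℓ)) (Fin e) ℂ,
        ∃ T' : Matrix (Fin e) (Fin (dim ℓ)) ℂ,
          T * T' = 1 ∧ T' * T = 1 ∧ ∀ σ, (prir ℓ).rep σ * T = T * ψ σ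

attribute [instance] PRIRFamily.instFintype PRIRFamily.instDecEq

/-- The signal states `σ_i` of the MPBT scheme, for a tuple `v` of (distinct) ports:
the ports are factors `0,…,a+k-1` and `B̃_j` (resp. `C_j`) is factor `a+k+j`. -/
def sigmaOp (d a k : ℕ) (v : Fin k → Fin (a + k)) : Mat d (a + k + k) :=
  ((1 : ℂ) / (d : ℂ) ^ a) •
    ((List.finRange k).map fun j : Fin k =>
      Pplus d (a + k + k) (Fin.castLE (Nat.le_add_right (a + k) k) (v j))
        ⟨a + k + (j : ℕ), by have := j.isLt; omega⟩).prod

/-- The MPBT operator `ρ = Σ_{i ∈ I} σ_i`. -/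
def rhoOp (d a k : ℕ) : Mat d (a + k + k) :=
  ∑ v : {v : Fin k → Fin (a + k) // Function.Injective v}, sigmaOp d a k v.1

/-- `P⁺_{A_i,C}`, tensored with the identity on the remaining ports. -/
def PplusTuple (d a k : ℕ) (v : Fin k → Fin (a + k)) : Mat d (a + k + k) :=
  ((List.finRange k).map fun j : Fin k =>
    Pplus d (a + k + k) (Fin.castLE (Nat.le_add_right (a + k) k) (v j))
      ⟨a + k + (j : ℕ), by have := j.isLt; omega⟩).prod

/-- The increasing enumeration of the ports not appearing in `v`. -/
def compEnum {a k : ℕ} (v : Fin k → Fin (a + k)) (hv : Function.Injective v) :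
    Fin a → Fin (a + k) := fun i =>
  (((Finset.image v Finset.univ)ᶜ.orderIsoOfFin (by
      rw [Finset.card_compl, Finset.card_image_of_injective _ hv, Finset.card_univ,
        Fintype.card_fin, Fintype.card_fin]
      omega)) i).1

/-- Placement of an operator on the tensor factors enumerated by `w`,
tensored with the identity on the remaining factors. -/
def placeOp {d a n : ℕ} (w : Fin a → Fin n) (X : Mat d a) : Mat d n :=
  Matrix.of fun f g =>
    if ∀ i : Fin n, (∀ j, w j ≠ i) → f i = g i
    then X (fun j => f (w j)) (fun j => g (w j)) else 0

/-- `U^{⊗N} ⊗ Ū^{⊗k}`. -/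
def Upow (d N k : ℕ) (U : Matrix (Fin d) (Fin d) ℂ) : Mat d (N + k) :=
  Matrix.of fun f g =>
    ∏ i : Fin (N + k),
      if (i : ℕ) < N then U (f i) (g i) else (starRingEnd ℂ) (U (f i) (g i))

/-- A family of concrete unitary irreps of a subgroup `H ⊆ S(n)`. -/
structure SubIrrepFamily (n : ℕ) (H : Subgroup (Equiv.Perm (Fin n))) where
  Label : Type
  [instFintype : Fintype Label]
  [instDecEq : DecidableEq Label]
  dim : Label → ℕ
  rep : ∀ ℓ, H →* Matrix (Fin (dim ℓ)) (Fin (dim ℓ)) ℂ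
  irrep : ∀ ℓ, IsUnitaryIrrep (rep ℓ)

attribute [instance] SubIrrepFamily.instFintype SubIrrepFamily.instDecEq

/-- An irrep of `S(n)` whose basis is adapted to the subgroup `H` (PRIR form). -/
structure PRIRSubData (n : ℕ) (H : Subgroup (Equiv.Perm (Fin n)))
    (Ψ : SubIrrepFamily n H) (e : ℕ) where
  rep : Equiv.Perm (Fin n) →* Matrix (Fin e) (Fin e) ℂ
  irrep : IsUnitaryIrrep rep
  Path : Type
  [instFintypePath : Fintype Path]
  [instDecEqPath : DecidableEq Path]
  endOf : Path → Ψ.Label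
  basis : ((r : Path) × Fin (Ψ.dim (endOf r))) ≃ Fin e
  block_diag : ∀ (h : H) (r : Path) (l l' : Fin (Ψ.dim (endOf r))),
      rep (h : Equiv.Perm (Fin n)) (basis ⟨r, l⟩) (basis ⟨r, l'⟩) = Ψ.rep (endOf r) h l l'
  block_off : ∀ (h : H) (r r' : Path), r ≠ r' →
      ∀ (l : Fin (Ψ.dim (endOf r))) (l' : Fin (Ψ.dim (endOf r'))),
      rep (h : Equiv.Perm (Fin n)) (basis ⟨r, l⟩) (basis ⟨r', l'⟩) = 0

attribute [instance] PRIRSubData.instFintypePath PRIRSubData.instDecEqPath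

/-- A family of pairwise non-isomorphic irreps of `S(n)` in PRIR form relative to `H`. -/
structure PRIRSubFamily (n : ℕ) (H : Subgroup (Equiv.Perm (Fin n)))
    (Ψ : SubIrrepFamily n H) where
  Label : Type
  [instFintype : Fintype Label]
  [instDecEq : DecidableEq Label]
  dim : Label → ℕ
  prir : ∀ ℓ, PRIRSubData n H Ψ (dim ℓ)
  noniso : ∀ ℓ ℓ', ℓ ≠ ℓ' → ∀ T : Matrix (Fin (dim ℓ)) (Fin (dim ℓ')) ℂ,
      (∀ σ, (prir ℓ).rep σ * T = T * (prir ℓ').rep σ) → T = 0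

attribute [instance] PRIRSubFamily.instFintype PRIRSubFamily.instDecEq

end


noncomputable section

lemma Vperm_mul (d n : ℕ) (σ τ : Equiv.Perm (Fin n)) :
    Vperm d n σ * Vperm d n τ = Vperm d n (σ * τ) := by
  ext f h
  simp only [Matrix.mul_apply, Vperm, Matrix.of_apply]
  rw [Finset.sum_eq_single (f ∘ σ)]
  · have : f ∘ ⇑(σ * τ) = (f ∘ ⇑σ) ∘ ⇑τ := by
      funext x; simp [Equiv.Perm.mul_apply]
    rw [this]; simp [Function.comp_assoc]
  · intro g _ hg
    rw [if_neg (fun hc => hg hc.symm), zero_mul]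
  · intro hmem; exact absurd (Finset.mem_univ _) hmem

lemma Vperm_one (d n : ℕ) : Vperm d n 1 = 1 := by
  ext f g
  simp only [Vperm, Matrix.of_apply, Matrix.one_apply]
  congr 1

lemma Vperm_conjTranspose (d n : ℕ) (σ : Equiv.Perm (Fin n)) :
    (Vperm d n σ)ᴴ = Vperm d n σ⁻¹ := by
  ext f g
  simp only [Matrix.conjTranspose_apply, Vperm, Matrix.of_apply]
  have : (g ∘ ⇑σ = f) ↔ (f ∘ ⇑σ⁻¹ = g) := by
    constructor
    · intro h; funext x; rw [← h]; simp
    · intro h; funext x; rw [← h]; simp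
  rw [apply_ite star, star_one, star_zero]
  by_cases h : g ∘ ⇑σ = f
  · rw [if_pos h, if_pos (this.1 h)]
  · rw [if_neg h, if_neg (fun hc => h (this.2 hc))]

lemma star_trace_Vperm (d n : ℕ) (σ : Equiv.Perm (Fin n)) :
    star (Matrix.trace (Vperm d n σ)) = Matrix.trace (Vperm d n σ) := by
  rw [← Matrix.trace_conjTranspose, Vperm_conjTranspose]
  simp only [Matrix.trace, Matrix.diag, Vperm, Matrix.of_apply]
  apply Finset.sum_congr rfl
  intro f _
  have : f ∘ ⇑σ⁻¹ = f ↔ f ∘ ⇑σ = f := by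
    constructor
    · intro h; funext x
      have := congrFun h (σ x); simp at this; simpa using this.symm
    · intro h; funext x
      have := congrFun h (σ⁻¹ x); simp at this; simpa using this.symm
  by_cases h : f ∘ ⇑σ⁻¹ = f
  · rw [if_pos h, if_pos (this.1 h)]
  · rw [if_neg h, if_neg (fun hc => h (this.2 hc))]

lemma trace_Vperm_inv (d n : ℕ) (σ : Equiv.Perm (Fin n)) :
    Matrix.trace (Vperm d n σ⁻¹) = Matrix.trace (Vperm d n σ) := by
  rw [← Vperm_conjTranspose, Matrix.trace_conjTranspose, star_trace_Vperm]

lemma trace_Vperm_conj (d n : ℕ) (g σ : Equiv.Perm (Fin n)) :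
    Matrix.trace (Vperm d n (g * σ * g⁻¹)) = Matrix.trace (Vperm d n σ) := by
  rw [← Vperm_mul, ← Vperm_mul, Matrix.trace_mul_cycle, Vperm_mul,
    inv_mul_cancel, Vperm_one, one_mul]

lemma rep_mul_inv_cancel {G : Type*} [Group G] {e : ℕ}
    (φ : G →* Matrix (Fin e) (Fin e) ℂ) (g : G) : φ g * φ g⁻¹ = 1 := by
  rw [← _root_.map_mul, mul_inv_cancel, _root_.map_one]

lemma rep_inv_mul_cancel {G : Type*} [Group G] {e : ℕ}
    (φ : G →* Matrix (Fin e) (Fin e) ℂ) (g : G) : φ g⁻¹ * φ g = 1 := by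
  rw [← _root_.map_mul, inv_mul_cancel, _root_.map_one]

lemma rep_inv_eq {G : Type*} [Group G] {e : ℕ}
    {φ : G →* Matrix (Fin e) (Fin e) ℂ} (hφ : IsUnitaryIrrep φ) (g : G) :
    φ g⁻¹ = (φ g)ᴴ := by
  calc φ g⁻¹ = ((φ g)ᴴ * φ g) * φ g⁻¹ := by rw [hφ.1 g, one_mul]
    _ = (φ g)ᴴ * (φ g * φ g⁻¹) := by rw [mul_assoc]
    _ = (φ g)ᴴ := by rw [rep_mul_inv_cancel, mul_one]

lemma star_trace_rep_inv {G : Type*} [Group G] {e : ℕ}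
    {φ : G →* Matrix (Fin e) (Fin e) ℂ} (hφ : IsUnitaryIrrep φ) (g : G) :
    star (Matrix.trace (φ g⁻¹)) = Matrix.trace (φ g) := by
  rw [rep_inv_eq hφ, Matrix.trace_conjTranspose, star_star]

lemma schur_orth {G : Type*} [Group G] [Fintype G] {e : ℕ}
    {φ : G →* Matrix (Fin e) (Fin e) ℂ} (hφ : IsUnitaryIrrep φ)
    (p s q t : Fin e) :
    ∑ g : G, φ g⁻¹ q p * φ g s t =
      ((Fintype.card G : ℂ) / e) * (if p = s then 1 else 0)
        * (if q = t then 1 else 0) := by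
  have he : 0 < e := p.pos
  set E1 : Matrix (Fin e) (Fin e) ℂ :=
    Matrix.of (fun x y => (if x = p then (1:ℂ) else 0) * (if y = s then 1 else 0)) with hE1
  set T : Matrix (Fin e) (Fin e) ℂ := ∑ g : G, φ g⁻¹ * E1 * φ g with hT
  have hcomm : ∀ h : G, T * φ h = φ h * T := by
    intro h
    rw [hT, Finset.sum_mul, Finset.mul_sum]
    apply Fintype.sum_equiv (Equiv.mulRight h)
    intro x
    simp only [Equiv.coe_mulRight]
    have h1 : φ (x * h)⁻¹ = φ h⁻¹ * φ x⁻¹ := by rw [_root_.mul_inv_rev, _root_.map_mul]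
    have h2 : φ (x * h) = φ x * φ h := _root_.map_mul φ x h
    rw [h1, h2]
    simp only [← mul_assoc]
    rw [rep_mul_inv_cancel φ h, one_mul]
  obtain ⟨c, hc⟩ := hφ.2 T hcomm
  have hTentry : T q t = ∑ g : G, φ g⁻¹ q p * φ g s t := by
    rw [hT, Matrix.sum_apply]
    apply Finset.sum_congr rfl
    intro g _
    rw [Matrix.mul_apply]
    rw [Finset.sum_eq_single s]
    · rw [Matrix.mul_apply, Finset.sum_eq_single p]
      · simp [hE1]
      · intro x _ hx; simp [hE1, hx]
      · intro hmem; exact absurd (Finset.mem_univ _) hmem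
    · intro y _ hy
      have hz : (φ g⁻¹ * E1) q y = 0 := by
        rw [Matrix.mul_apply]
        apply Finset.sum_eq_zero
        intro x _
        simp [hE1, hy]
      rw [hz, zero_mul]
    · intro hmem; exact absurd (Finset.mem_univ _) hmem
  have htrT : Matrix.trace T = (Fintype.card G : ℂ) * (if p = s then 1 else 0) := by
    rw [hT, Matrix.trace_sum]
    have h1 : ∀ g : G, Matrix.trace (φ g⁻¹ * E1 * φ g) = Matrix.trace E1 := by
      intro g
      rw [Matrix.trace_mul_cycle, rep_mul_inv_cancel φ g, one_mul]
    rw [Finset.sum_congr rfl (fun g _ => h1 g), Finset.sum_const]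
    have htrE1 : Matrix.trace E1 = (if p = s then 1 else 0) := by
      simp only [Matrix.trace, Matrix.diag, hE1, Matrix.of_apply]
      rw [Finset.sum_eq_single p]
      · simp [eq_comm]
      · intro x _ hx; simp [hx]
      · intro hmem; exact absurd (Finset.mem_univ _) hmem
    rw [htrE1]
    simp [mul_comm]
  have htrc : Matrix.trace T = c * e := by
    rw [hc, Matrix.trace_smul, Matrix.trace_one]
    simp [mul_comm]
  have hene : (e:ℂ) ≠ 0 := Nat.cast_ne_zero.mpr he.ne'
  have hce : c * (e:ℂ) = (Fintype.card G : ℂ) * (if p = s then 1 else 0) := by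
    rw [← htrc, htrT]
  have hc' : c = ((Fintype.card G : ℂ) * (if p = s then 1 else 0)) / e :=
    (eq_div_iff hene).mpr hce
  rw [← hTentry, hc]
  have hone : (c • (1 : Matrix (Fin e) (Fin e) ℂ)) q t = c * (if q = t then 1 else 0) := by
    simp [Matrix.one_apply]
  rw [hone, hc']
  ring

lemma Nmat_scalar (d m : ℕ) {e : ℕ}
    (φ : Equiv.Perm (Fin m) →* Matrix (Fin e) (Fin e) ℂ)
    (hφ : IsUnitaryIrrep φ) (he : 0 < e) :
    ∃ c : ℂ,
      (∑ τ : Equiv.Perm (Fin m), Matrix.trace (Vperm d m τ) • φ τ⁻¹) = c • 1 ∧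
      ((multSW d m φ : ℝ) : ℂ) = ((e : ℂ) / (Nat.factorial m : ℂ)) * c := by
  classical
  set t : Equiv.Perm (Fin m) → ℂ := fun τ => Matrix.trace (Vperm d m τ) with ht
  set N : Matrix (Fin e) (Fin e) ℂ := ∑ τ, t τ • φ τ⁻¹ with hN
  have hcomm : ∀ g, N * φ g = φ g * N := by
    intro g
    rw [hN, Finset.sum_mul, Finset.mul_sum]
    apply Fintype.sum_equiv ((Equiv.mulLeft g⁻¹).trans (Equiv.mulRight g))
    intro τ
    simp only [Equiv.trans_apply, Equiv.coe_mulLeft, Equiv.coe_mulRight]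
    have ht2 : t (g⁻¹ * τ * g) = t τ := by
      have h0 := trace_Vperm_conj d m g⁻¹ τ
      rw [inv_inv] at h0
      simpa [ht] using h0
    calc (t τ • φ τ⁻¹) * φ g = t τ • φ (τ⁻¹ * g) := by
          rw [smul_mul_assoc, ← _root_.map_mul]
      _ = t (g⁻¹ * τ * g) • (φ g * φ (g⁻¹ * τ * g)⁻¹) := by
          rw [ht2, ← _root_.map_mul]
          congr 2
          group
      _ = φ g * (t (g⁻¹ * τ * g) • φ (g⁻¹ * τ * g)⁻¹) := by
          rw [mul_smul_comm]
  obtain ⟨c, hc⟩ := hφ.2 N hcomm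
  have hene : (e : ℂ) ≠ 0 := Nat.cast_ne_zero.mpr he.ne'
  have htrN : Matrix.trace N = c * e := by
    rw [hc, Matrix.trace_smul, Matrix.trace_one]
    simp [smul_eq_mul]
  have htrN' : Matrix.trace N = ∑ τ, t τ * Matrix.trace (φ τ⁻¹) := by
    rw [hN, Matrix.trace_sum]
    simp [Matrix.trace_smul, smul_eq_mul]
  have hstar : star (Matrix.trace N) = Matrix.trace N := by
    rw [htrN']
    calc star (∑ τ, t τ * Matrix.trace (φ τ⁻¹))
        = ∑ τ, t τ * Matrix.trace (φ τ) := by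
          rw [star_sum]
          apply Finset.sum_congr rfl
          intro τ _
          rw [star_mul']
          rw [star_trace_rep_inv hφ τ]
          rw [ht]
          simp only []
          rw [star_trace_Vperm]
      _ = ∑ τ, t τ * Matrix.trace (φ τ⁻¹) := by
          apply Fintype.sum_equiv (Equiv.inv (Equiv.Perm (Fin m)))
          intro τ
          simp only [Equiv.inv_apply]
          rw [inv_inv]
          congr 1
          rw [ht]
          simp only []
          rw [trace_Vperm_inv]
  have hcs : star c = c := by
    rw [htrN, star_mul'] at hstar
    simp only [star_natCast] at hstar
    exact mul_right_cancel₀ hene hstar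
  refine ⟨c, hc, ?_⟩
  have hcre : ((c.re : ℝ) : ℂ) = c := Complex.conj_eq_iff_re.mp hcs
  have htrPop : Matrix.trace (Pop d m φ) = ((e:ℂ)/(m.factorial:ℂ)) * Matrix.trace N := by
    unfold Pop Eop
    rw [Matrix.trace_sum]
    simp only [Matrix.trace_smul, Matrix.trace_sum, smul_eq_mul]
    rw [htrN']
    simp only [Finset.mul_sum]
    rw [Finset.sum_comm]
    apply Finset.sum_congr rfl
    intro τ _
    rw [← Finset.mul_sum]
    congr 1
    rw [← Finset.sum_mul, mul_comm]
    congr 1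
  have hereal : (e:ℝ) ≠ 0 := Nat.cast_ne_zero.mpr he.ne'
  obtain ⟨x, hx⟩ : ∃ x : ℝ, (x:ℂ) = c := ⟨c.re, hcre⟩
  have h2 : Matrix.trace (Pop d m φ) = ((((e:ℝ)/(m.factorial:ℝ)) * (x * e) : ℝ) : ℂ) := by
    rw [htrPop, htrN, ← hx]
    push_cast
    ring
  have h3 : multSW d m φ = ((e:ℝ)/(m.factorial:ℝ)) * x := by
    unfold multSW
    rw [h2, Complex.ofReal_re]
    field_simp
  rw [h3]
  push_cast
  rw [hx]

lemma key_trace (d m : ℕ) {e : ℕ}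
    {φ : Equiv.Perm (Fin m) →* Matrix (Fin e) (Fin e) ℂ}
    (hφ : IsUnitaryIrrep φ) (p q : Fin e) (g : Equiv.Perm (Fin m)) :
    Matrix.trace (Eop d m φ p q * Vperm d m g)
      = ((multSW d m φ : ℝ) : ℂ) * φ g q p := by
  classical
  have he : 0 < e := p.pos
  obtain ⟨c, hc, hmult⟩ := Nmat_scalar d m φ hφ he
  have hexp : Eop d m φ p q * Vperm d m g
      = ((e : ℂ) / (Nat.factorial m : ℂ)) •
        ∑ τ : Equiv.Perm (Fin m), φ τ⁻¹ q p • Vperm d m (τ * g) := by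
    unfold Eop
    rw [smul_mul_assoc, Finset.sum_mul]
    congr 1
    apply Finset.sum_congr rfl
    intro τ _
    rw [smul_mul_assoc, Vperm_mul]
  have htr : Matrix.trace (Eop d m φ p q * Vperm d m g)
      = ((e : ℂ) / (Nat.factorial m : ℂ)) *
        ∑ τ : Equiv.Perm (Fin m), φ τ⁻¹ q p * Matrix.trace (Vperm d m (τ * g)) := by
    rw [hexp, Matrix.trace_smul, Matrix.trace_sum, smul_eq_mul]
    congr 1
    apply Finset.sum_congr rfl
    intro τ _
    rw [Matrix.trace_smul, smul_eq_mul]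
  rw [htr]
  have hre : ∑ τ : Equiv.Perm (Fin m), φ τ⁻¹ q p * Matrix.trace (Vperm d m (τ * g))
      = ∑ υ : Equiv.Perm (Fin m), Matrix.trace (Vperm d m υ) * φ (g * υ⁻¹) q p := by
    apply Fintype.sum_equiv (Equiv.mulRight g)
    intro τ
    simp only [Equiv.coe_mulRight]
    rw [mul_comm]
    congr 2
    rw [_root_.mul_inv_rev, ← mul_assoc, mul_inv_cancel, one_mul]
  rw [hre]
  have hN : ∑ υ : Equiv.Perm (Fin m), Matrix.trace (Vperm d m υ) * φ (g * υ⁻¹) q p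
      = (φ g * (∑ τ : Equiv.Perm (Fin m), Matrix.trace (Vperm d m τ) • φ τ⁻¹)) q p := by
    rw [Finset.mul_sum, Matrix.sum_apply]
    apply Finset.sum_congr rfl
    intro τ _
    rw [mul_smul_comm, ← _root_.map_mul]
    simp [Matrix.smul_apply, smul_eq_mul]
  rw [hN, hc]
  have : (φ g * (c • (1 : Matrix (Fin e) (Fin e) ℂ))) q p = c * φ g q p := by
    rw [mul_smul_comm, mul_one]
    simp [Matrix.smul_apply, smul_eq_mul]
  rw [this, hmult]
  ring

-- basic facts about splice
lemma splice_castLE {d a b : ℕ} (f : Fin a → Fin d) (t : Fin b → Fin d) (i : Fin a) :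
    splice f t (Fin.castLE (Nat.le_add_right a b) i) = f i := by
  simp [splice, Fin.castLE, i.isLt]

lemma splice_head {d a b : ℕ} (f : Fin a → Fin d) (t : Fin b → Fin d)
    (i : Fin (a + b)) (h : (i : ℕ) < a) : splice f t i = f ⟨i, h⟩ := by
  simp [splice, h]

lemma splice_tail {d a b : ℕ} (f : Fin a → Fin d) (t : Fin b → Fin d)
    (i : Fin (a + b)) (h : ¬ (i : ℕ) < a) :
    splice f t i = t ⟨(i : ℕ) - a, by have := i.isLt; omega⟩ := by
  simp [splice, h]

def spliceEquiv (d a b : ℕ) : ((Fin a → Fin d) × (Fin b → Fin d)) ≃ (Fin (a + b) → Fin d) where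
  toFun p := splice p.1 p.2
  invFun F := (fun i => F (Fin.castLE (Nat.le_add_right a b) i),
               fun j => F ⟨a + (j : ℕ), by have := j.isLt; omega⟩)
  left_inv p := by
    apply Prod.ext
    · funext i
      exact splice_castLE p.1 p.2 i
    · funext j
      show splice p.1 p.2 ⟨a + (j:ℕ), _⟩ = p.2 j
      rw [splice_tail _ _ _ (by simp)]
      congr 1
      ext
      simp
  right_inv F := by
    funext i
    show splice _ _ i = F i
    by_cases h : (i : ℕ) < a
    · rw [splice_head _ _ i h]
      congr 1
    · rw [splice_tail _ _ i h]
      have hidx : (⟨a + ((i:ℕ) - a), by have := i.isLt; omega⟩ : Fin (a + b)) = i := by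
        apply Fin.ext
        simp
        omega
      exact congrArg F hidx

lemma sum_splice {d a b : ℕ} {M : Type*} [AddCommMonoid M] (F : (Fin (a+b) → Fin d) → M) :
    ∑ f : Fin (a+b) → Fin d, F f
      = ∑ g : Fin a → Fin d, ∑ t : Fin b → Fin d, F (splice g t) := by
  rw [← (spliceEquiv d a b).sum_comp F]
  rw [Fintype.sum_prod_type]
  rfl

lemma trace_ptraceLast_mul {d : ℕ} (a b : ℕ) (X : Mat d (a + b)) (Y : Mat d a) :
    Matrix.trace (ptraceLast a b X * Y)
      = Matrix.trace (X * extOp (Nat.le_add_right a b) Y) := by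
  classical
  have hL : Matrix.trace (ptraceLast a b X * Y)
      = ∑ f : Fin a → Fin d, ∑ g : Fin a → Fin d, ∑ t : Fin b → Fin d,
          X (splice f t) (splice g t) * Y g f := by
    rw [Matrix.trace]
    simp only [Matrix.diag, Matrix.mul_apply, ptraceLast, Matrix.of_apply]
    apply Finset.sum_congr rfl; intro f _
    apply Finset.sum_congr rfl; intro g _
    rw [Finset.sum_mul]
  have hR : Matrix.trace (X * extOp (Nat.le_add_right a b) Y)
      = ∑ F : Fin (a+b) → Fin d, ∑ G : Fin (a+b) → Fin d,
          X F G * extOp (Nat.le_add_right a b) Y G F := by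
    rw [Matrix.trace]
    simp only [Matrix.diag, Matrix.mul_apply]
  rw [hL, hR]
  rw [sum_splice (fun F => ∑ G, X F G * extOp (Nat.le_add_right a b) Y G F)]
  apply Finset.sum_congr rfl; intro f _
  rw [Finset.sum_comm]
  apply Finset.sum_congr rfl; intro t _
  rw [sum_splice (fun G => X (splice f t) G * extOp (Nat.le_add_right a b) Y G (splice f t))]
  apply Finset.sum_congr rfl; intro g _
  -- now sum over s : Fin b → Fin d of X (splice f t) (splice g s) * extOp Y (splice g s) (splice f t)
  -- the extOp factor vanishes unless s = t
  rw [Finset.sum_eq_single t]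
  · congr 1
    simp only [extOp, Matrix.of_apply]
    rw [if_pos]
    · congr 1 <;> funext i <;> rw [splice_castLE]
    · intro i hi
      rw [splice_tail _ _ i (by omega), splice_tail _ _ i (by omega)]
  · intro s _ hs
    have : ¬ (∀ i : Fin (a+b), a ≤ (i : ℕ) → splice g s i = splice f t i) := by
      intro hall
      apply hs
      funext j
      have := hall ⟨a + (j : ℕ), by have := j.isLt; omega⟩ (by simp)
      rw [splice_tail _ _ _ (by simp), splice_tail _ _ _ (by simp)] at this
      simpa using this
    simp only [extOp, Matrix.of_apply]
    rw [if_neg this, mul_zero]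
  · intro hmem; exact absurd (Finset.mem_univ _) hmem
lemma permExt_apply_lt {m n : ℕ} (h : m ≤ n) (σ : Equiv.Perm (Fin m)) (x : Fin n)
    (hx : (x : ℕ) < m) : permExt h σ x = Fin.castLE h (σ ⟨(x : ℕ), hx⟩) := by
  unfold permExt
  rw [Equiv.Perm.extendDomain_apply_subtype _ (finLtEquiv h) hx]
  rfl

lemma permExt_apply_ge {m n : ℕ} (h : m ≤ n) (σ : Equiv.Perm (Fin m)) (x : Fin n)
    (hx : ¬ (x : ℕ) < m) : permExt h σ x = x := by
  unfold permExt
  rw [Equiv.Perm.extendDomain_apply_not_subtype]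
  exact hx

lemma extOp_Vperm {d m n : ℕ} (h : m ≤ n) (σ : Equiv.Perm (Fin m)) :
    extOp (d := d) h (Vperm d m σ) = Vperm d n (permExt h σ) := by
  ext f g
  simp only [extOp, Vperm, Matrix.of_apply]
  by_cases htail : ∀ i : Fin n, m ≤ (i : ℕ) → f i = g i
  · rw [if_pos htail]
    by_cases hhead : (fun i => f (Fin.castLE h i)) ∘ ⇑σ = (fun i => g (Fin.castLE h i))
    · rw [if_pos hhead, if_pos]
      funext x
      by_cases hx : (x : ℕ) < m
      · rw [Function.comp_apply, permExt_apply_lt h σ x hx]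
        have := congrFun hhead ⟨(x : ℕ), hx⟩
        simpa using this
      · rw [Function.comp_apply, permExt_apply_ge h σ x hx]
        exact htail x (by omega)
    · rw [if_neg hhead, if_neg]
      intro hc
      apply hhead
      funext i
      have := congrFun hc (Fin.castLE h i)
      rw [Function.comp_apply, permExt_apply_lt h σ _ (by simpa using i.isLt)] at this
      simpa using this
  · rw [if_neg htail, if_neg]
    intro hc
    apply htail
    intro i hi
    have := congrFun hc i
    rw [Function.comp_apply, permExt_apply_ge h σ i (by omega)] at this
    exact this

lemma ptraceLast_zero {d : ℕ} (a : ℕ) (X : Mat d (a + 0)) : ptraceLast a 0 X = X := by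
  ext f g
  simp only [ptraceLast, Matrix.of_apply]
  rw [Fintype.sum_unique]
  congr 1 <;> funext i <;> rw [splice_head _ _ i (by have := i.isLt; omega)] <;>
    exact congrArg _ (Fin.ext rfl)

lemma ptraceLast_smul {d : ℕ} (a b : ℕ) (c : ℂ) (X : Mat d (a + b)) :
    ptraceLast a b (c • X) = c • ptraceLast a b X := by
  ext f g
  simp only [ptraceLast, Matrix.of_apply, Matrix.smul_apply, smul_eq_mul, Finset.mul_sum]

lemma ptraceLast_add {d : ℕ} (a b : ℕ) (X Y : Mat d (a + b)) :
    ptraceLast a b (X + Y) = ptraceLast a b X + ptraceLast a b Y := by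
  ext f g
  simp only [ptraceLast, Matrix.of_apply, Matrix.add_apply, Finset.sum_add_distrib]

lemma ptraceLast_zero_mat {d : ℕ} (a b : ℕ) :
    ptraceLast a b (0 : Mat d (a + b)) = 0 := by
  ext f g
  simp [ptraceLast]

lemma splice_splice {d a b : ℕ} (f : Fin a → Fin d) (s : Fin b → Fin d) (u : Fin 1 → Fin d) :
    splice (splice f s) u = splice f (splice s u) := by
  funext i
  simp only [splice]
  split_ifs <;>
    first
      | rfl
      | (exfalso; simp_all; omega)
      | (congr 1; apply Fin.ext; simp; omega)
      | (congr 1; apply Fin.ext; simp)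

lemma ptraceLast_succ {d : ℕ} (a b : ℕ) (X : Mat d (a + (b + 1))) :
    ptraceLast a (b + 1) X = ptraceLast a b (ptraceLast (a + b) 1 X) := by
  ext f g
  simp only [ptraceLast, Matrix.of_apply]
  rw [← (spliceEquiv d b 1).sum_comp
    (fun t => X (splice f t) (splice g t)), Fintype.sum_prod_type]
  apply Finset.sum_congr rfl
  intro s _
  apply Finset.sum_congr rfl
  intro u _
  show X (splice f (splice s u)) (splice g (splice s u)) = _
  rw [← splice_splice, ← splice_splice]

lemma lt_iff_ne_last {n : ℕ} (y : Fin (n+1)) : (y : ℕ) < n ↔ y ≠ Fin.last n := by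
  constructor
  · intro h hc
    subst hc
    simp [Fin.val_last] at h
  · intro h
    have hy := y.isLt
    by_contra hc
    apply h
    apply Fin.ext
    simp only [Fin.val_last]
    omega

def lastFix {n : ℕ} (ρ : Equiv.Perm (Fin (n+1))) (hρ : ρ (Fin.last n) = Fin.last n) :
    Equiv.Perm (Fin n) :=
  Equiv.permCongr (finLtEquiv (Nat.le_succ n)).symm (ρ.subtypePerm (by
    intro x
    rw [lt_iff_ne_last, lt_iff_ne_last]
    constructor
    · intro h hc
      apply h
      rw [hc, hρ]
    · intro h hc
      exact h (ρ.injective (hc.trans hρ.symm))))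

lemma lastFix_val {n : ℕ} (ρ : Equiv.Perm (Fin (n+1))) (hρ : ρ (Fin.last n) = Fin.last n)
    (i : Fin n) :
    ((lastFix ρ hρ) i : ℕ) = (ρ (Fin.castLE (Nat.le_succ n) i) : ℕ) := by
  simp [lastFix, finLtEquiv, Equiv.Perm.subtypePerm_apply, Fin.castLE]

lemma splice_one_apply {d n : ℕ} (f : Fin n → Fin d) (t : Fin 1 → Fin d) (x : Fin (n+1)) :
    splice f t x = if h : (x : ℕ) < n then f ⟨(x : ℕ), h⟩ else t 0 := by
  by_cases h : (x : ℕ) < n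
  · rw [dif_pos h, splice_head _ _ x h]
  · rw [dif_neg h, splice_tail _ _ x h]
    exact congrArg t (Subsingleton.elim _ _)

lemma castLE_val {n : ℕ} (x : Fin (n+1)) (hx : (x : ℕ) < n) :
    Fin.castLE (Nat.le_succ n) ⟨(x : ℕ), hx⟩ = x := Fin.ext rfl

lemma ptraceLast_one_Vperm_fix {d n : ℕ} (τ : Equiv.Perm (Fin (n+1)))
    (hτ : τ (Fin.last n) = Fin.last n) :
    ptraceLast n 1 (Vperm d (n+1) τ) = (d : ℂ) • Vperm d n (lastFix τ hτ) := by
  ext f g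
  simp only [ptraceLast, Vperm, Matrix.of_apply, Matrix.smul_apply, smul_eq_mul]
  have hiff : ∀ t : Fin 1 → Fin d,
      (splice f t ∘ ⇑τ = splice g t) ↔ (f ∘ ⇑(lastFix τ hτ) = g) := by
    intro t
    rw [funext_iff, funext_iff]
    constructor
    · intro h i
      have hx := h (Fin.castLE (Nat.le_succ n) i)
      have hlt : ((τ (Fin.castLE (Nat.le_succ n) i)) : ℕ) < n := by
        rw [lt_iff_ne_last]
        intro hc
        have := τ.injective (hc.trans hτ.symm)
        have hv := congrArg Fin.val this
        simp only [Fin.castLE, Fin.val_last] at hv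
        have := i.isLt
        omega
      rw [Function.comp_apply, splice_one_apply, splice_one_apply, dif_pos hlt,
        dif_pos (by simpa using i.isLt)] at hx
      rw [Function.comp_apply]
      have hσ : f ((lastFix τ hτ) i) = f ⟨((τ (Fin.castLE (Nat.le_succ n) i)) : ℕ), hlt⟩ :=
        congrArg f (Fin.ext (lastFix_val τ hτ i))
      rw [hσ, hx]
      exact congrArg g (Fin.ext rfl)
    · intro h x
      rw [Function.comp_apply, splice_one_apply, splice_one_apply]
      by_cases hx : (x : ℕ) < n
      · have hlt : ((τ x) : ℕ) < n := by
          rw [lt_iff_ne_last]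
          intro hc
          have h2 := τ.injective (hc.trans hτ.symm)
          rw [h2] at hx
          simp [Fin.val_last] at hx
        rw [dif_pos hlt, dif_pos hx]
        have hi := h ⟨(x : ℕ), hx⟩
        rw [Function.comp_apply] at hi
        rw [← hi]
        apply congrArg f
        apply Fin.ext
        rw [lastFix_val, castLE_val]
      · have hxL : x = Fin.last n := by
          by_contra hc
          exact hx ((lt_iff_ne_last x).mpr hc)
        have hlt : ¬ ((τ x) : ℕ) < n := by
          rw [hxL, hτ]
          simp [Fin.val_last]
        rw [dif_neg hlt, dif_neg hx]
  by_cases hfg : f ∘ ⇑(lastFix τ hτ) = g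
  · rw [if_pos hfg, mul_one]
    have : ∀ t : Fin 1 → Fin d,
        (if splice f t ∘ ⇑τ = splice g t then (1:ℂ) else 0) = 1 := by
      intro t
      rw [if_pos ((hiff t).mpr hfg)]
    rw [Finset.sum_congr rfl (fun t _ => this t), Finset.sum_const]
    simp [Fintype.card_fun]
  · rw [if_neg hfg, mul_zero]
    apply Finset.sum_eq_zero
    intro t _
    rw [if_neg (fun hc => hfg ((hiff t).mp hc))]

lemma ptraceLast_one_Vperm_move {d n : ℕ} (τ : Equiv.Perm (Fin (n+1)))
    (hτ : τ (Fin.last n) ≠ Fin.last n) :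
    ∃ σ : Equiv.Perm (Fin n), ptraceLast n 1 (Vperm d (n+1) τ) = Vperm d n σ := by
  classical
  set b : Fin (n+1) := τ (Fin.last n) with hbdef
  have hb' : (b : ℕ) < n := (lt_iff_ne_last b).mpr hτ
  set ρ : Equiv.Perm (Fin (n+1)) := Equiv.swap b (Fin.last n) * τ with hρdef
  have hρ : ρ (Fin.last n) = Fin.last n := by
    rw [hρdef]
    rw [Equiv.Perm.mul_apply, ← hbdef, Equiv.swap_apply_left]
  refine ⟨lastFix ρ hρ, ?_⟩
  set σ := lastFix ρ hρ with hσdef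
  have hρval : ∀ x : Fin (n+1), τ x ≠ Fin.last n → τ x ≠ b → ρ x = τ x := by
    intro x h1 h2
    rw [hρdef, Equiv.Perm.mul_apply, Equiv.swap_apply_of_ne_of_ne h2 h1]
  have hρlast : ∀ x : Fin (n+1), τ x = Fin.last n → ρ x = b := by
    intro x h1
    rw [hρdef, Equiv.Perm.mul_apply, h1, Equiv.swap_apply_right]
  have htau_ne_b : ∀ x : Fin (n+1), (x : ℕ) < n → τ x ≠ b := by
    intro x hx hc
    have := τ.injective (hc.trans hbdef)
    rw [this] at hx
    simp [Fin.val_last] at hx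
  ext f g
  simp only [ptraceLast, Vperm, Matrix.of_apply]
  have hiff : ∀ t : Fin 1 → Fin d,
      (splice f t ∘ ⇑τ = splice g t) ↔ (t 0 = f ⟨(b : ℕ), hb'⟩ ∧ f ∘ ⇑σ = g) := by
    intro t
    rw [funext_iff, funext_iff]
    constructor
    · intro h
      have hlastval := h (Fin.last n)
      rw [Function.comp_apply, splice_one_apply, splice_one_apply, ← hbdef,
        dif_pos hb', dif_neg (by simp [Fin.val_last])] at hlastval
      constructor
      · exact hlastval.symm
      · intro i
        have hx := h (Fin.castLE (Nat.le_succ n) i)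
        have hxlt : ((Fin.castLE (Nat.le_succ n) i : Fin (n+1)) : ℕ) < n := by
          simpa using i.isLt
        rw [Function.comp_apply, splice_one_apply, splice_one_apply,
          dif_pos hxlt] at hx
        rw [Function.comp_apply]
        by_cases hL : τ (Fin.castLE (Nat.le_succ n) i) = Fin.last n
        · rw [hL, dif_neg (by simp [Fin.val_last])] at hx
          have hσi : f (σ i) = f ⟨(b : ℕ), hb'⟩ := by
            apply congrArg f
            apply Fin.ext
            rw [hσdef, lastFix_val]
            rw [hρlast _ hL]
          rw [hσi, hlastval, hx]
          exact congrArg g (Fin.ext rfl)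
        · have hlt : ((τ (Fin.castLE (Nat.le_succ n) i)) : ℕ) < n :=
            (lt_iff_ne_last _).mpr hL
          rw [dif_pos hlt] at hx
          have hσi : f (σ i) = f ⟨((τ (Fin.castLE (Nat.le_succ n) i)) : ℕ), hlt⟩ := by
            apply congrArg f
            apply Fin.ext
            rw [hσdef, lastFix_val]
            rw [hρval _ hL (htau_ne_b _ hxlt)]
          rw [hσi, hx]
          exact congrArg g (Fin.ext rfl)
    · rintro ⟨ht, hfg⟩ x
      rw [Function.comp_apply, splice_one_apply, splice_one_apply]
      by_cases hx : (x : ℕ) < n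
      · rw [dif_pos hx]
        have hfgx := hfg ⟨(x : ℕ), hx⟩
        rw [Function.comp_apply] at hfgx
        by_cases hL : τ x = Fin.last n
        · rw [hL, dif_neg (by simp [Fin.val_last]), ht]
          rw [← hfgx]
          apply congrArg f
          apply Fin.ext
          rw [hσdef, lastFix_val]
          rw [castLE_val, hρlast _ hL]
        · have hlt : ((τ x) : ℕ) < n := (lt_iff_ne_last _).mpr hL
          rw [dif_pos hlt, ← hfgx]
          apply congrArg f
          apply Fin.ext
          rw [hσdef, lastFix_val]
          rw [castLE_val, hρval _ hL (htau_ne_b _ hx)]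
      · have hxL : x = Fin.last n := by
          by_contra hc
          exact hx ((lt_iff_ne_last x).mpr hc)
        rw [dif_neg hx, hxL, ← hbdef, dif_pos hb', ht]
  by_cases hfg : f ∘ ⇑σ = g
  · rw [if_pos hfg]
    have hstep : ∀ t : Fin 1 → Fin d,
        (if splice f t ∘ ⇑τ = splice g t then (1:ℂ) else 0)
          = (if t 0 = f ⟨(b : ℕ), hb'⟩ then 1 else 0) := by
      intro t
      by_cases h0 : t 0 = f ⟨(b : ℕ), hb'⟩
      · rw [if_pos ((hiff t).mpr ⟨h0, hfg⟩), if_pos h0]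
      · rw [if_neg (fun hc => h0 ((hiff t).mp hc).1), if_neg h0]
    rw [Finset.sum_congr rfl (fun t _ => hstep t)]
    rw [Fintype.sum_equiv (Equiv.funUnique (Fin 1) (Fin d))
      _ (fun w => if w = f ⟨(b : ℕ), hb'⟩ then (1:ℂ) else 0) (by
        intro t
        rfl)]
    rw [Finset.sum_ite_eq' Finset.univ (f ⟨(b : ℕ), hb'⟩) (fun _ => (1:ℂ))]
    simp
  · rw [if_neg hfg]
    apply Finset.sum_eq_zero
    intro t _
    rw [if_neg (fun hc => hfg ((hiff t).mp hc).2)]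

lemma ptraceLast_one_Vperm {d n : ℕ} (τ : Equiv.Perm (Fin (n+1))) :
    ∃ (c : ℂ) (σ : Equiv.Perm (Fin n)),
      ptraceLast n 1 (Vperm d (n+1) τ) = c • Vperm d n σ := by
  by_cases h : τ (Fin.last n) = Fin.last n
  · exact ⟨(d : ℂ), lastFix τ h, ptraceLast_one_Vperm_fix τ h⟩
  · obtain ⟨σ, hσ⟩ := ptraceLast_one_Vperm_move (d := d) τ h
    exact ⟨1, σ, by rw [hσ, one_smul]⟩

lemma ptraceLast_Vperm {d : ℕ} (n : ℕ) : ∀ (k : ℕ) (τ : Equiv.Perm (Fin (n + k))),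
    ∃ (c : ℂ) (σ : Equiv.Perm (Fin n)),
      ptraceLast n k (Vperm d (n+k) τ) = c • Vperm d n σ
  | 0, τ => ⟨1, τ, by rw [ptraceLast_zero, one_smul]; rfl⟩
  | (k+1), τ => by
      obtain ⟨c1, σ1, h1⟩ := ptraceLast_one_Vperm (d := d) (n := n + k) τ
      obtain ⟨c2, σ2, h2⟩ := ptraceLast_Vperm (d := d) n k σ1
      refine ⟨c1 * c2, σ2, ?_⟩
      rw [ptraceLast_succ]
      have h1' : ptraceLast (n+k) 1 (Vperm d (n + (k+1)) τ) = c1 • Vperm d (n+k) σ1 := h1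
      rw [h1', ptraceLast_smul, h2, smul_smul]

def VSpan (d n : ℕ) : Submodule ℂ (Mat d n) := Submodule.span ℂ (Set.range (Vperm d n))

lemma ptraceLast_mem_span {d a k : ℕ} (X : Mat d (a + k)) (hX : X ∈ VSpan d (a + k)) :
    ptraceLast a k X ∈ VSpan d a := by
  induction hX using Submodule.span_induction with
  | mem x hx =>
      obtain ⟨τ, rfl⟩ := hx
      obtain ⟨c, σ, hcσ⟩ := ptraceLast_Vperm (d := d) a k τ
      rw [hcσ]
      exact Submodule.smul_mem _ _ (Submodule.subset_span ⟨σ, rfl⟩)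
  | zero => rw [ptraceLast_zero_mat]; exact Submodule.zero_mem _
  | add x y _ _ hx hy => rw [ptraceLast_add]; exact Submodule.add_mem _ hx hy
  | smul c x _ hx => rw [ptraceLast_smul]; exact Submodule.smul_mem _ _ hx

lemma span_eq_zero_of_trace {d a : ℕ} (Z : Mat d a) (hZ : Z ∈ VSpan d a)
    (h : ∀ g : Equiv.Perm (Fin a), Matrix.trace (Z * Vperm d a g) = 0) : Z = 0 := by
  classical
  have key : ∀ W ∈ VSpan d a, Matrix.trace (Z * Wᴴ) = 0 := by
    intro W hW
    induction hW using Submodule.span_induction with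
    | mem x hx =>
        obtain ⟨g, rfl⟩ := hx
        rw [Vperm_conjTranspose]
        exact h g⁻¹
    | zero => simp
    | add x y _ _ hx hy => rw [Matrix.conjTranspose_add, Matrix.mul_add, Matrix.trace_add,
        hx, hy, add_zero]
    | smul c x _ hx => rw [Matrix.conjTranspose_smul, mul_smul_comm, Matrix.trace_smul,
        hx, smul_zero]
  have h0 := key Z hZ
  have hsum : ∑ x : Fin a → Fin d, ∑ y : Fin a → Fin d, (Z x y * star (Z x y)) = 0 := by
    rw [← h0, Matrix.trace]
    simp only [Matrix.diag, Matrix.mul_apply, Matrix.conjTranspose_apply]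
  have hre : ∑ x : Fin a → Fin d, ∑ y : Fin a → Fin d, Complex.normSq (Z x y) = 0 := by
    have h1 : ∀ x y, Z x y * star (Z x y) = ((Complex.normSq (Z x y) : ℝ) : ℂ) := by
      intro x y
      rw [Complex.star_def, Complex.mul_conj]
    rw [Finset.sum_congr rfl (fun x _ => Finset.sum_congr rfl (fun y _ => h1 x y))] at hsum
    have := hsum
    push_cast at this
    exact_mod_cast this
  ext f g
  have hterm : ∀ x ∈ Finset.univ, (0:ℝ) ≤ ∑ y : Fin a → Fin d, Complex.normSq (Z x y) := by
    intro x _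
    apply Finset.sum_nonneg
    intro y _
    exact Complex.normSq_nonneg _
  have hx := (Finset.sum_eq_zero_iff_of_nonneg hterm).mp hre f (Finset.mem_univ _)
  have hy := (Finset.sum_eq_zero_iff_of_nonneg (fun y _ => Complex.normSq_nonneg _)).mp hx g
    (Finset.mem_univ _)
  simpa using Complex.normSq_eq_zero.mp hy

lemma Eop_mem_span (d m : ℕ) {e : ℕ} (φ : Equiv.Perm (Fin m) →* Matrix (Fin e) (Fin e) ℂ)
    (p q : Fin e) : Eop d m φ p q ∈ VSpan d m := by
  unfold Eop
  apply Submodule.smul_mem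
  apply Submodule.sum_mem
  intro τ _
  exact Submodule.smul_mem _ _ (Submodule.subset_span ⟨τ, rfl⟩)

end

lemma trace_mul_Eop {d a : ℕ} {e' : ℕ} (X : Mat d a)
    (ψ : Equiv.Perm (Fin a) →* Matrix (Fin e') (Fin e') ℂ) (i j : Fin e') :
    Matrix.trace (X * Eop d a ψ i j)
      = ((e' : ℂ) / (Nat.factorial a : ℂ)) *
          ∑ σ : Equiv.Perm (Fin a), ψ σ⁻¹ j i * Matrix.trace (X * Vperm d a σ) := by
  unfold Eop
  rw [mul_smul_comm, Matrix.mul_sum, Matrix.trace_smul, Matrix.trace_sum, smul_eq_mul]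
  congr 1
  apply Finset.sum_congr rfl
  intro σ _
  rw [mul_smul_comm, Matrix.trace_smul, smul_eq_mul]

/-- For `k ≥ 1`, `m = a + k ≥ 2k` and an irrep `φ^μ` of `S(m)` with
`m_μ ≠ 0`, in PRIR form relative to the chain `S(m) ⊃ ⋯ ⊃ S(m-k)`, the partial
trace over the last `k` factors satisfies
`tr_{m-k+1,…,m} E^μ_{(r,i),(r̃,j)} = δ^{r,r̃}·(m_μ/m_β)·E^β_{i j}`. -/
theorem statement_7 (d a k : ℕ) (hd : 2 ≤ d) (hk : 1 ≤ k) (hka : k ≤ a)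
    (Φ : IrrepFamily a) (e : ℕ) (P : PRIRData a k Φ e)
    (hm : multSW d (a + k) P.rep ≠ 0)
    (r r' : P.Path) (i : Fin (Φ.dim (P.endOf r))) (j : Fin (Φ.dim (P.endOf r'))) :
    ptraceLast a k (Eop d (a + k) P.rep (P.basis ⟨r, i⟩) (P.basis ⟨r', j⟩))
      = if h : r = r' then
          ((multSW d (a + k) P.rep / multSW d a (Φ.rep (P.endOf r)) : ℝ) : ℂ) •
            Eop d a (Φ.rep (P.endOf r)) i
              (Fin.cast (congrArg Φ.dim (congrArg P.endOf h.symm)) j)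
        else 0 := by
  classical
  have hLtr : ∀ (g : Equiv.Perm (Fin a)) (p' q' : Fin e),
      Matrix.trace (ptraceLast a k (Eop d (a + k) P.rep p' q') * Vperm d a g)
        = ((multSW d (a + k) P.rep : ℝ) : ℂ) *
            P.rep (permExt (Nat.le_add_right a k) g) q' p' := by
    intro g p' q'
    rw [trace_ptraceLast_mul, extOp_Vperm, key_trace d (a + k) P.irrep p' q']
  have hβne : multSW d a (Φ.rep (P.endOf r)) ≠ 0 := by
    intro hzero
    have hE0 : Eop d a (Φ.rep (P.endOf r)) i i = 0 := by
      apply span_eq_zero_of_trace _ (Eop_mem_span d a (Φ.rep (P.endOf r)) i i)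
      intro g
      rw [key_trace d a (Φ.irrep (P.endOf r)) i i g, hzero]
      simp
    have h1 : (0 : ℂ)
        = Matrix.trace (ptraceLast a k
            (Eop d (a + k) P.rep (P.basis ⟨r, i⟩) (P.basis ⟨r, i⟩)) *
              Eop d a (Φ.rep (P.endOf r)) i i) := by
      rw [hE0, Matrix.mul_zero, Matrix.trace_zero]
    rw [trace_mul_Eop] at h1
    have h2 : ∀ σ : Equiv.Perm (Fin a),
        Φ.rep (P.endOf r) σ⁻¹ i i *
          Matrix.trace (ptraceLast a k
            (Eop d (a + k) P.rep (P.basis ⟨r, i⟩) (P.basis ⟨r, i⟩)) * Vperm d a σ)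
        = ((multSW d (a + k) P.rep : ℝ) : ℂ) *
            (Φ.rep (P.endOf r) σ⁻¹ i i * Φ.rep (P.endOf r) σ i i) := by
      intro σ
      rw [hLtr σ _ _, P.block_diag σ r i i]
      ring
    rw [Finset.sum_congr rfl (fun σ _ => h2 σ), ← Finset.mul_sum,
      schur_orth (Φ.irrep (P.endOf r)) i i i i] at h1
    have hcard : (Fintype.card (Equiv.Perm (Fin a)) : ℂ) = (Nat.factorial a : ℂ) := by
      rw [Fintype.card_perm, Fintype.card_fin]
    rw [hcard] at h1
    simp only [if_pos rfl, ↓reduceIte, mul_one] at h1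
    have hdβ : ((Φ.dim (P.endOf r) : ℕ) : ℂ) ≠ 0 :=
      Nat.cast_ne_zero.mpr (Φ.dim_pos _).ne'
    have hfa : ((Nat.factorial a : ℕ) : ℂ) ≠ 0 :=
      Nat.cast_ne_zero.mpr (Nat.factorial_ne_zero a)
    have h3 : (0 : ℂ) = ((multSW d (a + k) P.rep : ℝ) : ℂ) := by
      rw [h1]
      field_simp
    exact hm (by exact_mod_cast h3.symm)
  rw [← sub_eq_zero]
  apply span_eq_zero_of_trace
  · apply Submodule.sub_mem
    · exact ptraceLast_mem_span _ (Eop_mem_span d (a + k) P.rep _ _)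
    · by_cases h : r = r'
      · rw [dif_pos h]
        exact Submodule.smul_mem _ _ (Eop_mem_span d a (Φ.rep (P.endOf r)) i _)
      · rw [dif_neg h]
        exact Submodule.zero_mem _
  · intro g
    rw [Matrix.sub_mul, Matrix.trace_sub, hLtr g _ _]
    by_cases h : r = r'
    · subst h
      rw [dif_pos rfl]
      have hcast : Fin.cast (congrArg Φ.dim (congrArg P.endOf (Eq.symm (Eq.refl r)))) j
          = j := rfl
      rw [hcast]
      rw [smul_mul_assoc, Matrix.trace_smul, key_trace d a (Φ.irrep (P.endOf r)) i j g,
        smul_eq_mul]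
      rw [P.block_diag g r j i]
      have hb : ((multSW d a (Φ.rep (P.endOf r)) : ℝ) : ℂ) ≠ 0 := by
        exact_mod_cast hβne
      rw [Complex.ofReal_div]
      field_simp
      ring
    · rw [dif_neg h, Matrix.zero_mul, Matrix.trace_zero, sub_zero]
      rw [P.block_off g r' r (fun hc => h hc.symm) j i, mul_zero]
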